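/- Let V be a finite-dimensional complex vector space, let w be an invertible linear endomorphism of V whose characteristic polynomial has real coefficients (as holds for any element of a complexified real reflection group), let h be a positive integer, let omega = exp(2 pi i / h), and let d be an integer. Then the function q -> det(1 - q^{h+1} w) / det(1 - q w) has a removable singularity at q = omega^d, and its limit as q tends to omega^d equals (h+1)^m, where m is the algebraic multiplicity of omega^d as an eigenvalue of w acting on V. -/

import Mathlib

open Filter Polynomial Module

private lemma eval_charpoly_mat {n : Type*} [DecidableEq n] [Fintype n]
    (M : Matrix n n ℂ) (x : ℂ) : M.charpoly.eval x = (x • 1 - M).det := by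
  rw [Matrix.charpoly, ← Polynomial.coe_evalRingHom, RingHom.map_det]
  congr 1
  ext i j
  rcases eq_or_ne i j with rfl | hij
  · simp [Matrix.charmatrix_apply_eq, Matrix.one_apply]
  · simp [Matrix.charmatrix_apply_ne _ _ _ hij, Matrix.one_apply_ne hij]

private lemma det_eval {V : Type} [AddCommGroup V] [Module ℂ V] [FiniteDimensional ℂ V]
    (w : Module.End ℂ V) (x : ℂ) :
    LinearMap.det (x • (1 : Module.End ℂ V) - w) = (LinearMap.charpoly w).eval x := by
  let b := Module.Free.chooseBasis ℂ V
  rw [← LinearMap.det_toMatrix b, LinearMap.charpoly_def]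
  rw [map_sub, map_smul, LinearMap.toMatrix_one]
  exact (eval_charpoly_mat _ x).symm

private lemma det_one_sub_smul {V : Type} [AddCommGroup V] [Module ℂ V] [FiniteDimensional ℂ V]
    (w : Module.End ℂ V) {c : ℂ} (hc : c ≠ 0) :
    LinearMap.det (1 - c • w) =
      ((LinearMap.charpoly w).roots.map (fun μ => 1 - c * μ)).prod := by
  set p := LinearMap.charpoly w with hp
  have hmonic : p.Monic := LinearMap.charpoly_monic w
  have hsplits : p.Splits := IsAlgClosed.splits p
  have hcard : p.roots.card = p.natDegree := (Polynomial.splits_iff_card_roots).mp hsplits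
  have h1 : (1 : Module.End ℂ V) - c • w = c • (c⁻¹ • (1 : Module.End ℂ V) - w) := by
    rw [smul_sub, smul_smul, mul_inv_cancel₀ hc, one_smul]
  have heval : p.eval c⁻¹ = (p.roots.map fun a => c⁻¹ - a).prod := by
    conv_lhs => rw [hsplits.eq_prod_roots_of_monic hmonic]
    rw [Polynomial.eval_multiset_prod, Multiset.map_map]
    simp
  have hfr : finrank ℂ V = p.roots.card := by
    rw [hcard, hp, LinearMap.charpoly_natDegree]
  have hconst : c ^ p.roots.card = (p.roots.map fun _ => c).prod := by
    rw [Multiset.map_const', Multiset.prod_replicate]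
  rw [h1, LinearMap.det_smul, det_eval, heval, hfr, hconst, ← Multiset.prod_map_mul]
  apply congrArg
  apply Multiset.map_congr rfl
  intro x _
  rw [mul_sub, mul_inv_cancel₀ hc]

private lemma multiset_prod_continuousAt (t : Multiset ℂ) (f : ℂ → ℂ → ℂ) (x : ℂ)
    (hf : ∀ μ ∈ t, ContinuousAt (fun q => f μ q) x) :
    ContinuousAt (fun q => (t.map fun μ => f μ q).prod) x := by
  induction t using Multiset.induction_on with
  | empty => simpa using continuousAt_const
  | cons a u ih =>
    simp only [Multiset.map_cons, Multiset.prod_cons]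
    exact (hf a (Multiset.mem_cons_self a u)).mul
      (ih fun μ hμ => hf μ (Multiset.mem_cons_of_mem hμ))


/-- Proposition: let `w` be an invertible endomorphism of a finite-dimensional complex
vector space whose characteristic polynomial has real coefficients, let `h ≥ 1`,
`ω = exp(2πi/h)`, and `d ∈ ℤ`.  Then `q ↦ det(1 - q^{h+1} w)/det(1 - q w)` has a
removable singularity at `q = ω^d`: its limit as `q → ω^d` (through `q ≠ ω^d`) is
`(h+1)^m`, where `m` is the algebraic multiplicity of `ω^d` as an eigenvalue of `w`. -/
theorem stmt8 (V : Type) [AddCommGroup V] [Module ℂ V] [FiniteDimensional ℂ V]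
    (w : Module.End ℂ V) (hw : IsUnit w)
    (hreal : ∀ i : ℕ, ((LinearMap.charpoly w).coeff i).im = 0)
    (h : ℕ) (hh : 1 ≤ h) (d : ℤ) :
    Tendsto
      (fun q : ℂ => LinearMap.det (1 - q ^ (h + 1) • w) / LinearMap.det (1 - q • w))
      (nhdsWithin (Complex.exp (2 * Real.pi * Complex.I / h) ^ d)
        {Complex.exp (2 * Real.pi * Complex.I / h) ^ d}ᶜ)
      (nhds ((h + 1 : ℂ) ^
        (LinearMap.charpoly w).rootMultiplicity
          (Complex.exp (2 * Real.pi * Complex.I / h) ^ d))) := by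
  classical
  set z : ℂ := 2 * Real.pi * Complex.I / h with hz
  set ω : ℂ := Complex.exp z with hω
  set l : ℂ := ω ^ d with hldef
  have hhC : (h : ℂ) ≠ 0 := Nat.cast_ne_zero.mpr (by omega)
  have hωne : ω ≠ 0 := Complex.exp_ne_zero _
  have hωh : ω ^ (h : ℕ) = 1 := by
    rw [hω, ← Complex.exp_nat_mul, hz, mul_comm, div_mul_cancel₀ _ hhC]
    exact Complex.exp_two_pi_mul_I
  have hl0 : l ≠ 0 := zpow_ne_zero _ hωne
  have hlh : l ^ (h : ℕ) = 1 := by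
    rw [hldef, ← zpow_natCast, ← zpow_mul, mul_comm, zpow_mul, zpow_natCast, hωh, one_zpow]
  have hlh1 : l ^ (h + 1) = l := by rw [pow_succ, hlh, one_mul]
  set ν : ℂ := l⁻¹ with hνdef
  have hν0 : ν ≠ 0 := inv_ne_zero hl0
  have hνh : ν ^ (h : ℕ) = 1 := by rw [hνdef, inv_pow, hlh, inv_one]
  have hνh1 : ν ^ (h + 1) = ν := by rw [pow_succ, hνh, one_mul]
  have hlν : l * ν = 1 := mul_inv_cancel₀ hl0
  -- conjugation
  have hconjz : (starRingEnd ℂ) z = -z := by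
    rw [hz]
    simp [map_div₀, Complex.conj_ofReal, map_ofNat]
    ring
  have hconjω : (starRingEnd ℂ) ω = ω⁻¹ := by
    rw [hω, ← Complex.exp_conj, hconjz, Complex.exp_neg]
  have hconjl : (starRingEnd ℂ) l = ν := by
    rw [hldef, map_zpow₀, hconjω, inv_zpow, ← zpow_neg, hνdef, ← zpow_neg]
  -- roots bookkeeping
  set p := LinearMap.charpoly w with hp
  have hsplits : p.Splits := IsAlgClosed.splits p
  have hmap : p.map (starRingEnd ℂ) = p := by
    ext i
    rw [Polynomial.coeff_map]
    exact Complex.conj_eq_iff_im.mpr (hreal i)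
  have hrootsmap : p.roots.map (starRingEnd ℂ) = p.roots := by
    rw [← hsplits.roots_map (starRingEnd ℂ), hmap]
  set m := p.rootMultiplicity l with hm
  have hcountl : p.roots.count l = m := p.count_roots
  have hcount : p.roots.count ν = m := by
    conv_lhs => rw [← hconjl, ← hrootsmap]
    rw [Multiset.count_map_eq_count' _ _ (starRingEnd ℂ).injective]
    exact hcountl
  set t := p.roots.filter (fun μ => ¬ μ = ν) with htdef
  have hsdecomp : p.roots = Multiset.replicate m ν + t := by
    conv_lhs => rw [← Multiset.filter_add_not (fun μ => μ = ν) p.roots]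
    rw [Multiset.filter_eq', hcount]
  have htne : ∀ μ ∈ t, 1 - l * μ ≠ 0 := by
    intro μ hμ
    have hμν : ¬ μ = ν := (Multiset.mem_filter.mp hμ).2
    intro hcon
    apply hμν
    have : l * μ = 1 := by linear_combination -hcon
    rw [hνdef]
    exact eq_inv_of_mul_eq_one_right this
  -- the eventual identity
  have hids : ∀ q : ℂ, q ≠ 0 → q ≠ l →
      LinearMap.det (1 - q ^ (h + 1) • w) / LinearMap.det (1 - q • w) =
      (∑ k ∈ Finset.range (h + 1), (q * ν) ^ k) ^ m *
        (t.map fun μ => (1 - q ^ (h + 1) * μ) / (1 - q * μ)).prod := by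
    intro q hq0 hql
    rw [det_one_sub_smul w (pow_ne_zero _ hq0), det_one_sub_smul w hq0,
      ← Multiset.prod_map_div]
    conv_lhs => rw [hsdecomp]
    rw [Multiset.map_add, Multiset.prod_add, Multiset.map_replicate, Multiset.prod_replicate]
    congr 1
    have hqν : 1 - q * ν ≠ 0 := by
      intro hcon
      apply hql
      have hq1 : q * ν = 1 := by linear_combination -hcon
      calc q = (q * ν) * l := by rw [mul_assoc, mul_comm ν l, hlν, mul_one]
        _ = l := by rw [hq1, one_mul]
    have hnum : q ^ (h + 1) * ν = (q * ν) ^ (h + 1) := by rw [mul_pow, hνh1]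
    congr 1
    rw [hnum, eq_comm, eq_div_iff hqν]
    have hgs := geom_sum_mul (q * ν) (h + 1)
    linear_combination -hgs
  -- limits
  have hA : Tendsto (fun q : ℂ => (∑ k ∈ Finset.range (h + 1), (q * ν) ^ k) ^ m)
      (nhdsWithin l {l}ᶜ) (nhds ((h + 1 : ℂ) ^ m)) := by
    have hc : Continuous fun q : ℂ => (∑ k ∈ Finset.range (h + 1), (q * ν) ^ k) ^ m :=
      (continuous_finset_sum _ fun k _ => (continuous_id.mul continuous_const).pow k).pow m
    have hval : (∑ k ∈ Finset.range (h + 1), (l * ν) ^ k) ^ m = (h + 1 : ℂ) ^ m := by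
      rw [hlν]
      simp
    have := (hc.tendsto l).mono_left (nhdsWithin_le_nhds (s := {l}ᶜ))
    rwa [hval] at this
  have hB : Tendsto (fun q : ℂ => (t.map fun μ => (1 - q ^ (h + 1) * μ) / (1 - q * μ)).prod)
      (nhdsWithin l {l}ᶜ) (nhds 1) := by
    have hCA : ContinuousAt
        (fun q : ℂ => (t.map fun μ => (1 - q ^ (h + 1) * μ) / (1 - q * μ)).prod) l := by
      apply multiset_prod_continuousAt
      intro μ hμ
      exact ContinuousAt.div (by fun_prop) (by fun_prop) (htne μ hμ)
    have hval : (t.map fun μ => (1 - l ^ (h + 1) * μ) / (1 - l * μ)).prod = 1 := by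
      apply Multiset.prod_eq_one
      intro x hx
      obtain ⟨μ, hμ, rfl⟩ := Multiset.mem_map.mp hx
      rw [hlh1]
      exact div_self (htne μ hμ)
    have := hCA.tendsto.mono_left (nhdsWithin_le_nhds (s := {l}ᶜ))
    rwa [hval] at this
  have hfinal := hA.mul hB
  rw [mul_one] at hfinal
  apply Tendsto.congr' _ hfinal
  have h1 : ∀ᶠ q in nhdsWithin l {l}ᶜ, q ≠ 0 :=
    (eventually_ne_nhds hl0).filter_mono nhdsWithin_le_nhds
  have h2 : ∀ᶠ q in nhdsWithin l {l}ᶜ, q ≠ l := by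
    filter_upwards [self_mem_nhdsWithin] with q hq
    exact hq
  filter_upwards [h1, h2] with q hq0 hql
  exact (hids q hq0 hql).symm
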